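/- Let t(n,k) = [z^n](s(z)/(z*r(z)^{k+1})) be the entries of the Riordan array ((z^2-z+1)*C(z(1-z+z^2))^2, z*C(z(1-z+z^2))). Then t(n,k) = sum_{j=0}^{n-k} ((k+2)/(2(n-j)-k+2)) * binomial(2(n-j)-k+2, n-k-j) * a(n-k-j+1, j), where a(m,j) = (-1)^j * sum_{i=0}^{m} binomial(m,i)*binomial(m-i, j-2i). -/

import Mathlib

open PowerSeries Finset

def fB (m K : ℕ) : ℚ := if K = 0 ∧ m = 0 then 1 else (K : ℚ) / (2*m + K) * (Nat.choose (2*m + K) m : ℚ)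

lemma fB_zero (K : ℕ) : fB 0 K = 1 := by
  rcases eq_or_ne K 0 with h | h
  · simp [fB, h]
  · simp [fB, h, div_self (show (K:ℚ) ≠ 0 by exact_mod_cast h)]

lemma fB_step (m K : ℕ) : fB (m+1) (K+1) = fB (m+1) K + fB m (K+2) := by
  have c1 : ((2*(m+1)+(K+1)).choose (m+1) : ℚ)
      = (Nat.factorial (2*m+K+3)) / (Nat.factorial (m+1) * Nat.factorial (m+K+2)) := by
    rw [Nat.cast_choose ℚ (by omega), show 2*(m+1)+(K+1) - (m+1) = m+K+2 from by omega,
      show 2*(m+1)+(K+1) = 2*m+K+3 from by omega]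
  have c2 : ((2*(m+1)+K).choose (m+1) : ℚ)
      = (Nat.factorial (2*m+K+2)) / (Nat.factorial (m+1) * Nat.factorial (m+K+1)) := by
    rw [Nat.cast_choose ℚ (by omega), show 2*(m+1)+K - (m+1) = m+K+1 from by omega,
      show 2*(m+1)+K = 2*m+K+2 from by omega]
  have c3 : ((2*m+(K+2)).choose m : ℚ)
      = (Nat.factorial (2*m+K+2)) / (Nat.factorial m * Nat.factorial (m+K+2)) := by
    rw [Nat.cast_choose ℚ (by omega), show 2*m+(K+2) - m = m+K+2 from by omega,
      show 2*m+(K+2) = 2*m+K+2 from by omega]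
  simp only [fB, if_neg (by omega : ¬(K+1 = 0 ∧ m+1 = 0)),
    if_neg (by omega : ¬(K = 0 ∧ m+1 = 0)), if_neg (by omega : ¬(K+2 = 0 ∧ m = 0)),
    c1, c2, c3]
  have f1 : (Nat.factorial (2*m+K+3) : ℚ) = (2*m+K+3) * Nat.factorial (2*m+K+2) := by
    rw [show 2*m+K+3 = (2*m+K+2)+1 by ring, Nat.factorial_succ]; push_cast; ring
  have f2 : (Nat.factorial (m+K+2) : ℚ) = (m+K+2) * Nat.factorial (m+K+1) := by
    rw [show m+K+2 = (m+K+1)+1 by ring, Nat.factorial_succ]; push_cast; ring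
  have f3 : (Nat.factorial (m+1) : ℚ) = (m+1) * Nat.factorial m := by
    rw [Nat.factorial_succ]; push_cast; ring
  rw [f1, f2, f3]
  have h1 : (Nat.factorial (2*m+K+2) : ℚ) ≠ 0 := by exact_mod_cast (Nat.factorial_pos _).ne'
  have h2 : (Nat.factorial (m+K+1) : ℚ) ≠ 0 := by exact_mod_cast (Nat.factorial_pos _).ne'
  have h3 : (Nat.factorial m : ℚ) ≠ 0 := by exact_mod_cast (Nat.factorial_pos _).ne'
  push_cast
  field_simp
  ring

def aCoeff (m j : ℕ) : ℚ :=
  (-1 : ℚ) ^ j * ∑ i ∈ Finset.range (m + 1),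
    if j < 2 * i then 0
    else (Nat.choose m i : ℚ) * (Nat.choose (m - i) (j - 2 * i) : ℚ)

lemma coeff_one_sub_X_pow (r t : ℕ) :
    coeff (R := ℚ) t ((1 - X)^r) = (-1)^t * (r.choose t : ℚ) := by
  have h : ((1 - X : ℚ⟦X⟧))^r = ∑ i ∈ range (r+1),
      C (R := ℚ) ((-1)^i * (r.choose i : ℚ)) * X^i := by
    rw [sub_eq_neg_add, add_pow]
    refine Finset.sum_congr rfl fun i _ => ?_
    simp only [one_pow, mul_one, map_mul, map_pow, map_neg, map_one, map_natCast]
    ring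
  rw [h, map_sum]
  simp only [coeff_C_mul, coeff_X_pow]
  rcases le_or_gt t r with ht | ht
  · rw [Finset.sum_eq_single t]
    · simp
    · intro b _ hb; simp [Ne.symm hb]
    · intro hmem; exact absurd (Finset.mem_range.2 (by omega)) hmem
  · rw [Finset.sum_eq_zero, Nat.choose_eq_zero_of_lt ht]
    · simp
    · intro b hb
      have : b ≠ t := by simp only [mem_range] at hb; omega
      simp [Ne.symm this]

lemma coeff_P_pow (m j : ℕ) : coeff (R := ℚ) j ((X^2 - X + 1)^m) = aCoeff m j := by
  have hP : (X^2 - X + 1 : ℚ⟦X⟧) = X^2 + (1 - X) := by ring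
  rw [hP, add_pow, map_sum]
  rw [aCoeff, Finset.mul_sum]
  refine Finset.sum_congr rfl fun i hi => ?_
  have hi' : i ≤ m := by simpa using Nat.lt_succ_iff.mp (Finset.mem_range.mp hi)
  have : (X^2 : ℚ⟦X⟧)^i * (1-X)^(m-i) * (m.choose i : ℚ⟦X⟧)
      = X^(2*i) * ((1-X)^(m-i) * C (R := ℚ) (m.choose i : ℚ)) := by
    rw [← pow_mul, map_natCast]; ring
  rw [this, coeff_X_pow_mul', coeff_mul_C, coeff_one_sub_X_pow]
  rcases le_or_gt (2*i) j with h2 | h2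
  · rw [if_pos h2, if_neg (not_lt.2 h2)]
    have hsign : (-1 : ℚ)^(j - 2*i) = (-1)^j := by
      have : (-1 : ℚ)^j = (-1)^(j - 2*i) * ((-1)^2)^i := by
        rw [← pow_mul, ← pow_add]
        congr 1
        omega
      simp at this
      rw [this]
    rw [hsign]; ring
  · rw [if_neg (not_le.2 h2), if_pos h2, mul_zero]
section
variable (T : PowerSeries ℚ) (hT : (X - X^2 + X^3) * T^2 + 1 = T)

noncomputable def qS : PowerSeries ℚ := X * (X^2 - X + 1)

lemma hq0 : coeff (R := ℚ) 0 qS = 0 := by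
  simp [qS, coeff_zero_eq_constantCoeff, map_mul]

lemma hqpow {j m : ℕ} (h : j < m) : coeff (R := ℚ) j (qS^m) = 0 := by
  have hdvd : (X : ℚ⟦X⟧)^m ∣ qS^m := pow_dvd_pow_of_dvd ⟨X^2 - X + 1, rfl⟩ m
  exact X_pow_dvd_iff.mp hdvd j h

include hT in
lemma hT' (K : ℕ) : T^(K+1) = T^K + qS * T^(K+2) := by
  have h1 : 1 + qS * T^2 = T := by unfold qS; linear_combination hT
  calc T^(K+1) = T * T^K := by ring
    _ = (1 + qS * T^2) * T^K := by rw [h1]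
    _ = T^K + qS * T^(K+2) := by ring

include hT in
lemma claimA : ∀ n K : ℕ, coeff (R := ℚ) n (T^K) = ∑ m ∈ range (n+1), fB m K * coeff (R := ℚ) n (qS^m) := by
  intro n
  induction n using Nat.strong_induction_on with
  | _ n IH =>
    intro K
    induction K with
    | zero =>
      rw [Finset.sum_eq_single 0]
      · simp [fB_zero]
      · intro m hm hm0
        have : fB m 0 = 0 := by simp [fB, hm0]
        rw [this, zero_mul]
      · intro h; exact absurd (mem_range.2 (by omega)) h
    | succ K IHK =>
      have key : coeff (R := ℚ) n (qS * T^(K+2)) = ∑ m ∈ range n, fB m (K+2) * coeff (R := ℚ) n (qS^(m+1)) := by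
        have rhs : ∀ m : ℕ, coeff (R := ℚ) n (qS^(m+1))
            = ∑ p ∈ antidiagonal n, coeff (R := ℚ) p.1 qS * coeff (R := ℚ) p.2 (qS^m) := by
          intro m; rw [pow_succ', coeff_mul]
        simp only [rhs, Finset.mul_sum]
        rw [Finset.sum_comm, coeff_mul]
        refine Finset.sum_congr rfl fun p hp => ?_
        rcases Nat.eq_zero_or_pos p.1 with h0 | h0
        · rw [h0, hq0]
          simp
        · have hpn : p.1 + p.2 = n := mem_antidiagonal.mp hp
          have hp2 : p.2 < n := by omega
          rw [IH p.2 hp2 (K+2), Finset.mul_sum,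
            Finset.sum_subset (Finset.range_subset_range.2 (by omega : p.2 + 1 ≤ n))
              (fun m hm1 hm2 => by
                rw [hqpow (show p.2 < m by simp only [mem_range] at hm1 hm2; omega),
                  mul_zero, mul_zero])]
          exact Finset.sum_congr rfl fun m _ => by ring
      rw [hT' T hT K, map_add, IHK, key]
      rw [Finset.sum_range_succ' (fun m => fB m (K+1) * coeff (R := ℚ) n (qS^m)) n,
        Finset.sum_range_succ' (fun m => fB m K * coeff (R := ℚ) n (qS^m)) n,
        fB_zero, fB_zero, add_right_comm, ← Finset.sum_add_distrib]
      congr 1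
      exact Finset.sum_congr rfl fun m _ => by rw [fB_step]; ring

include hT in
lemma claimB (R : PowerSeries ℚ) (n K : ℕ) :
    coeff (R := ℚ) n (R * T^K) = ∑ m ∈ range (n+1), fB m K * coeff (R := ℚ) n (R * qS^m) := by
  simp only [coeff_mul, Finset.mul_sum]
  rw [Finset.sum_comm]
  refine Finset.sum_congr rfl fun p hp => ?_
  have hpn : p.1 + p.2 = n := mem_antidiagonal.mp hp
  rw [claimA T hT p.2 K, Finset.mul_sum,
    ← Finset.sum_subset (Finset.range_subset_range.2 (by omega : p.2 + 1 ≤ n + 1))]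
  · refine Finset.sum_congr rfl fun m _ => by ring
  · intro m _ hm
    rw [hqpow (by simp at hm ⊢; omega), mul_zero, mul_zero]

end

theorem valleyless_riordan_closed_form (T : PowerSeries ℚ)
    (hT : (X - X^2 + X^3) * T^2 + 1 = T) :
    ∀ n k : ℕ, k ≤ n →
      coeff (R := ℚ) n ((X^2 - X + 1) * X ^ k * T ^ (k + 2)) =
        ∑ j ∈ Finset.range (n - k + 1),
          ((k : ℚ) + 2) / (2 * ((n : ℚ) - j) - k + 2) *
            (Nat.choose (2 * (n - j) - k + 2) (n - k - j) : ℚ) *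
            aCoeff (n - k - j + 1) j := by
  intro n k hkn
  rw [claimB T hT ((X^2 - X + 1) * X^k) n (k+2)]
  have hRq : ∀ m : ℕ, (X^2 - X + 1 : ℚ⟦X⟧) * X^k * qS^m
      = X^(k+m) * (X^2 - X + 1)^(m+1) := by
    intro m; unfold qS; rw [mul_pow, pow_add]; ring
  have hterm : ∀ m : ℕ, coeff (R := ℚ) n ((X^2 - X + 1 : ℚ⟦X⟧) * X^k * qS^m)
      = if k + m ≤ n then aCoeff (m+1) (n - (k+m)) else 0 := by
    intro m
    rw [hRq, coeff_X_pow_mul']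
    split_ifs with h
    · rw [coeff_P_pow]
    · rfl
  -- restrict the sum to range (n - k + 1)
  rw [← Finset.sum_subset (Finset.range_subset_range.2 (by omega : n - k + 1 ≤ n + 1))
      (fun m hm1 hm2 => by
        rw [hterm, if_neg (by simp only [mem_range] at hm1 hm2; omega), mul_zero])]
  -- reflect the RHS sum
  rw [show n - k + 1 = (n - k) + 1 from rfl]
  rw [← Finset.sum_range_reflect (fun j =>
      ((k : ℚ) + 2) / (2 * ((n : ℚ) - j) - k + 2) *
        (Nat.choose (2 * (n - j) - k + 2) (n - k - j) : ℚ) *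
        aCoeff (n - k - j + 1) j) (n - k + 1)]
  refine Finset.sum_congr rfl fun m hm => ?_
  have hmN : m ≤ n - k := by simpa [Nat.lt_succ_iff] using mem_range.mp hm
  simp only [Nat.add_sub_cancel]
  have e1 : n - k - (n - k - m) = m := by omega
  have e2 : 2 * (n - (n - k - m)) - k + 2 = 2*m + (k+2) := by omega
  have e4 : ((n - k - m : ℕ) : ℚ) = (n : ℚ) - k - m := by
    rw [Nat.cast_sub (by omega), Nat.cast_sub (by omega)]
  rw [hterm, if_pos (by omega), e1, e2, e4,
    show n - (k + m) = n - k - m from by omega]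
  simp only [fB, if_neg (show ¬((k+2 = 0) ∧ m = 0) by omega)]
  push_cast
  ring
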